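/- Let E be a real normed vector space, L : E ≃L[ℝ] E a continuous linear equivalence, p a real number, and N : E → E positively homogeneous of degree p and Fréchet differentiable at u* ∈ E. If L u* = N(u*), then the continuous linear map S := L⁻¹ ∘ (fderiv N u*) satisfies S u* = p • u*. In particular, if u* ≠ 0, then p is an eigenvalue of S with eigenvector u* (this is the eigenvalue of magnitude |p| > 1 that makes the classical fixed-point iteration u_{n+1} = L⁻¹ N(u_n) fail to converge). -/

import Mathlib

/-- If `L u* = N u*` with `N` positively homogeneous of degree `p` and differentiable at
`u*`, then `S = L⁻¹ ∘ N'(u*)` satisfies `S u* = p • u*`; in particular if `u* ≠ 0` then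
`p` is an eigenvalue of `S` with eigenvector `u*`. -/
theorem degree_is_eigenvalue_of_iteration_matrix
    {E : Type*} [NormedAddCommGroup E] [NormedSpace ℝ E]
    (L : E ≃L[ℝ] E) (p : ℝ) (N : E → E)
    (hN : ∀ t : ℝ, 0 < t → ∀ x : E, N (t • x) = t ^ p • N x)
    (ustar : E) (hdiff : DifferentiableAt ℝ N ustar)
    (hsol : L ustar = N ustar) :
    ((L.symm : E →L[ℝ] E).comp (fderiv ℝ N ustar)) ustar = p • ustar ∧
    (ustar ≠ 0 →
      Module.End.HasEigenvector
        (((L.symm : E →L[ℝ] E).comp (fderiv ℝ N ustar) : E →L[ℝ] E) : E →ₗ[ℝ] E)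
        p ustar) := by
  -- Euler identity: fderiv N ustar ustar = p • N ustar
  have h1 : HasDerivAt (fun t : ℝ => N (t • ustar)) (fderiv ℝ N ustar ustar) 1 := by
    have hs : HasDerivAt (fun t : ℝ => t • ustar) ustar 1 := by
      simpa using (hasDerivAt_id (1:ℝ)).smul_const ustar
    have hd : HasFDerivAt N (fderiv ℝ N ustar) ((1:ℝ) • ustar) := by
      simpa using hdiff.hasFDerivAt
    exact hd.comp_hasDerivAt (1:ℝ) hs
  have h2 : HasDerivAt (fun t : ℝ => t ^ p • N ustar) (p • N ustar) 1 := by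
    have := (Real.hasDerivAt_rpow_const (x := (1:ℝ)) (p := p) (Or.inl one_ne_zero)).smul_const
      (N ustar)
    simpa using this
  have heq : (fun t : ℝ => N (t • ustar)) =ᶠ[nhds (1:ℝ)] fun t => t ^ p • N ustar := by
    filter_upwards [lt_mem_nhds (show (0:ℝ) < 1 by norm_num)] with t ht
    exact hN t ht ustar
  have h3 : fderiv ℝ N ustar ustar = p • N ustar := by
    have := (h1.congr_of_eventuallyEq heq.symm).unique h2
    simpa using this
  have hmain : ((L.symm : E →L[ℝ] E).comp (fderiv ℝ N ustar)) ustar = p • ustar := by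
    have : L.symm (N ustar) = ustar := by rw [← hsol]; exact L.symm_apply_apply ustar
    simp [ContinuousLinearMap.comp_apply, h3, map_smul, this]
  refine ⟨hmain, fun hne => ?_⟩
  constructor
  · rw [Module.End.mem_eigenspace_iff]
    exact hmain
  · exact hne
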